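/- (Hannabuss–Takahashi decomposition.) Let Λ ∈ SO₀(1,2) and suppose that the x₂-component of the vector Λ (1,0,−1) is nonzero (equivalently, in the Iwasawa decomposition Λ = R₀(α) Λ₁(t′) D(q′) the rotation angle satisfies cos α ≠ 0). Then there exist unique s, t, q ∈ ℝ and k ∈ {0,1} with Λ = Λ₂(s) Pᵏ Λ₁(t) D(q), where P = diag(1,−1,−1) = R₀(π). -/

import Mathlib

open Matrix

noncomputable section

/-- The Minkowski bilinear form `η(x,y) = x₀y₀ − x₁y₁ − x₂y₂` on ℝ³. -/
def mink (x y : Fin 3 → ℝ) : ℝ := x 0 * y 0 - x 1 * y 1 - x 2 * y 2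

/-- The Minkowski quadratic form `Q(x) = η(x,x)`. -/
def Qf (x : Fin 3 → ℝ) : ℝ := mink x x

/-- The Minkowski metric matrix `diag(1,−1,−1)`. -/
def etaM : Matrix (Fin 3) (Fin 3) ℝ := !![1, 0, 0; 0, -1, 0; 0, 0, -1]

/-- The Lorentz group `O(1,2)`, as a set of 3×3 real matrices. -/
def O12 : Set (Matrix (Fin 3) (Fin 3) ℝ) := {L | L * etaM * Lᵀ = etaM}

/-- The proper orthochronous Lorentz group `SO₀(1,2)`. -/
def SO012 : Set (Matrix (Fin 3) (Fin 3) ℝ) :=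
  {L | L * etaM * Lᵀ = etaM ∧ L.det = 1 ∧ 0 < L 0 0}

/-- The rotation `R₀(α)` around the `x₀`-axis. -/
def R0 (α : ℝ) : Matrix (Fin 3) (Fin 3) ℝ :=
  !![1, 0, 0; 0, Real.cos α, -Real.sin α; 0, Real.sin α, Real.cos α]

/-- The boost `Λ₁(t)` leaving the `x₁`-axis invariant. -/
def B1 (t : ℝ) : Matrix (Fin 3) (Fin 3) ℝ :=
  !![Real.cosh t, 0, Real.sinh t; 0, 1, 0; Real.sinh t, 0, Real.cosh t]

/-- The boost `Λ₂(s)` leaving the `x₂`-axis invariant. -/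
def B2 (s : ℝ) : Matrix (Fin 3) (Fin 3) ℝ :=
  !![Real.cosh s, Real.sinh s, 0; Real.sinh s, Real.cosh s, 0; 0, 0, 1]

/-- The horospherical translation `D(q)`. -/
def Dm (q : ℝ) : Matrix (Fin 3) (Fin 3) ℝ :=
  !![1 + q ^ 2 / 2, q, q ^ 2 / 2; q, 1, q; -(q ^ 2 / 2), -q, 1 - q ^ 2 / 2]

/-- The time reflection `T = diag(−1,1,1)`. -/
def Tm : Matrix (Fin 3) (Fin 3) ℝ := !![-1, 0, 0; 0, 1, 0; 0, 0, 1]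

/-- The space reflection `P = diag(1,−1,−1)`. -/
def Pm : Matrix (Fin 3) (Fin 3) ℝ := !![1, 0, 0; 0, -1, 0; 0, 0, -1]

/-! ### Auxiliary lemmas -/

lemma B1_lor (t : ℝ) : B1 t * etaM * (B1 t)ᵀ = etaM := by
  have h := Real.cosh_sq_sub_sinh_sq t
  have ht : (B1 t)ᵀ = B1 t := by ext i j; fin_cases i <;> fin_cases j <;> rfl
  rw [ht]; ext i j
  fin_cases i <;> fin_cases j <;>
    simp [B1, etaM, Matrix.mul_fin_three, Matrix.vecHead, Matrix.vecTail] <;> nlinarith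

lemma B2_lor (s : ℝ) : B2 s * etaM * (B2 s)ᵀ = etaM := by
  have h := Real.cosh_sq_sub_sinh_sq s
  have ht : (B2 s)ᵀ = B2 s := by ext i j; fin_cases i <;> fin_cases j <;> rfl
  rw [ht]; ext i j
  fin_cases i <;> fin_cases j <;>
    simp [B2, etaM, Matrix.mul_fin_three, Matrix.vecHead, Matrix.vecTail] <;> nlinarith

lemma Pm_lor : Pm * etaM * Pmᵀ = etaM := by
  have ht : Pmᵀ = Pm := by ext i j; fin_cases i <;> fin_cases j <;> rfl
  rw [ht]; ext i j
  fin_cases i <;> fin_cases j <;>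
    simp [Pm, etaM, Matrix.mul_fin_three, Matrix.vecHead, Matrix.vecTail]

lemma B1_mul (a b : ℝ) : B1 a * B1 b = B1 (a + b) := by
  ext i j
  fin_cases i <;> fin_cases j <;>
    simp [B1, Matrix.mul_fin_three, Matrix.vecHead, Matrix.vecTail,
      Real.cosh_add, Real.sinh_add] <;> ring

lemma B2_mul (a b : ℝ) : B2 a * B2 b = B2 (a + b) := by
  ext i j
  fin_cases i <;> fin_cases j <;>
    simp [B2, Matrix.mul_fin_three, Matrix.vecHead, Matrix.vecTail,
      Real.cosh_add, Real.sinh_add] <;> ring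

lemma B1_zero : B1 0 = 1 := by
  ext i j
  fin_cases i <;> fin_cases j <;>
    simp [B1, Matrix.one_apply, Matrix.vecHead, Matrix.vecTail]

lemma B2_zero : B2 0 = 1 := by
  ext i j
  fin_cases i <;> fin_cases j <;>
    simp [B2, Matrix.one_apply, Matrix.vecHead, Matrix.vecTail]

lemma Pm_sq : Pm * Pm = 1 := by
  ext i j
  fin_cases i <;> fin_cases j <;>
    simp [Pm, Matrix.mul_fin_three, Matrix.one_apply, Matrix.vecHead, Matrix.vecTail]

lemma B1_inv (t : ℝ) : B1 t * B1 (-t) = 1 := by rw [B1_mul, add_neg_cancel, B1_zero]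

lemma B2_inv (s : ℝ) : B2 s * B2 (-s) = 1 := by rw [B2_mul, add_neg_cancel, B2_zero]

lemma B1_det (t : ℝ) : (B1 t).det = 1 := by
  have h := Real.cosh_sq_sub_sinh_sq t
  simp [Matrix.det_fin_three, B1, Matrix.vecHead, Matrix.vecTail]; nlinarith

lemma B2_det (s : ℝ) : (B2 s).det = 1 := by
  have h := Real.cosh_sq_sub_sinh_sq s
  simp [Matrix.det_fin_three, B2, Matrix.vecHead, Matrix.vecTail]; nlinarith

lemma Pm_det : Pm.det = 1 := by
  simp [Matrix.det_fin_three, Pm, Matrix.vecHead, Matrix.vecTail]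

lemma Pmk_sq (k : Fin 2) : Pm ^ (k : ℕ) * Pm ^ (k : ℕ) = 1 := by
  fin_cases k <;> simp [Pm_sq]

lemma Pmk_lor (k : Fin 2) : Pm ^ (k : ℕ) * etaM * (Pm ^ (k : ℕ))ᵀ = etaM := by
  fin_cases k <;> simp [Pm_lor]

lemma Pmk_det (k : Fin 2) : (Pm ^ (k : ℕ)).det = 1 := by
  fin_cases k <;> simp [Pm_det]

lemma lor_mul {A B : Matrix (Fin 3) (Fin 3) ℝ} (hA : A * etaM * Aᵀ = etaM)
    (hB : B * etaM * Bᵀ = etaM) : A * B * etaM * (A * B)ᵀ = etaM := by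
  rw [Matrix.transpose_mul]
  calc A * B * etaM * (Bᵀ * Aᵀ) = A * (B * etaM * Bᵀ) * Aᵀ := by
        simp only [Matrix.mul_assoc]
    _ = etaM := by rw [hB, hA]

lemma etaM_sq : etaM * etaM = 1 := by
  ext i j
  fin_cases i <;> fin_cases j <;>
    simp [etaM, Matrix.mul_fin_three, Matrix.one_apply, Matrix.vecHead, Matrix.vecTail]

lemma lor_transpose {L : Matrix (Fin 3) (Fin 3) ℝ} (h : L * etaM * Lᵀ = etaM) :
    Lᵀ * etaM * L = etaM := by
  have h1 : L * (etaM * Lᵀ * etaM) = 1 := by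
    calc L * (etaM * Lᵀ * etaM) = (L * etaM * Lᵀ) * etaM := by simp only [Matrix.mul_assoc]
      _ = 1 := by rw [h, etaM_sq]
  have h2 : (etaM * Lᵀ * etaM) * L = 1 := mul_eq_one_comm.mp h1
  have h3 : etaM * ((etaM * Lᵀ * etaM) * L) = etaM := by rw [h2, mul_one]
  calc Lᵀ * etaM * L = (etaM * etaM) * Lᵀ * etaM * L := by rw [etaM_sq, one_mul]
    _ = etaM * ((etaM * Lᵀ * etaM) * L) := by simp only [Matrix.mul_assoc]
    _ = etaM := h3

/-- The stabilizer of the null vector `(1,0,−1)` in `SO(1,2)` is the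
horospherical subgroup `{D(q)}`. -/
lemma stab (N : Matrix (Fin 3) (Fin 3) ℝ) (hη : N * etaM * Nᵀ = etaM) (hdet : N.det = 1)
    (hfix : N.mulVec ![1,0,-1] = ![1,0,-1]) : N = Dm (N 0 1) := by
  have E : ∀ i j, N i 0 * N j 0 - N i 1 * N j 1 - N i 2 * N j 2 = etaM i j := by
    intro i j
    have := congrFun (congrFun hη i) j
    simp [Matrix.mul_apply, Fin.sum_univ_three, etaM, Matrix.transpose_apply] at this ⊢
    fin_cases i <;> fin_cases j <;>
      simp_all [etaM, Matrix.vecHead, Matrix.vecTail] <;> linarith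
  have E00 := E 0 0; have E11 := E 1 1; have E22 := E 2 2
  have E01 := E 0 1; have E02 := E 0 2; have E12 := E 1 2
  norm_num [etaM, Matrix.cons_val', Matrix.cons_val_two, Matrix.head_cons, Matrix.tail_cons] at E00 E11 E22 E01 E02 E12
  have F0 : N 0 0 - N 0 2 = 1 := by
    have := congrFun hfix 0
    simpa [Matrix.mulVec, dotProduct, Fin.sum_univ_three, sub_eq_add_neg] using this
  have F1 : N 1 0 - N 1 2 = 0 := by
    have := congrFun hfix 1
    simpa [Matrix.mulVec, dotProduct, Fin.sum_univ_three, sub_eq_add_neg] using this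
  have F2 : N 2 0 - N 2 2 = -1 := by
    have := congrFun hfix 2
    simpa [Matrix.mulVec, dotProduct, Fin.sum_univ_three, sub_eq_add_neg] using this
  rw [Matrix.det_fin_three] at hdet
  have hc : N 0 2 = N 0 1 ^ 2 / 2 := by
    linear_combination (1/2 : ℝ) * E00 - (1/2 : ℝ) * (N 0 0 + N 0 2 + 1) * F0
  have ha : N 0 0 = 1 + N 0 1 ^ 2 / 2 := by linarith
  have hf : N 1 2 = N 1 0 := by linarith
  have hd : N 1 0 = N 0 1 * N 1 1 := by
    linear_combination E01 - N 1 0 * F0 + N 0 2 * hf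
  have hgi : N 2 0 = N 2 2 - 1 := by linarith
  rw [ha, hc, hgi] at E02
  rw [hgi] at E22
  have hbh : (N 0 1 + N 2 1) ^ 2 = 0 := by linear_combination -2 * E02 - E22
  have hh : N 2 1 = -(N 0 1) := by
    have : N 0 1 + N 2 1 = 0 := pow_eq_zero_iff two_ne_zero |>.mp hbh
    linarith
  have hii : N 2 2 = 1 - N 0 1 ^ 2 / 2 := by
    rw [hh] at E02; linear_combination E02
  have hg : N 2 0 = -(N 0 1 ^ 2 / 2) := by rw [hgi, hii]; ring
  rw [ha, hc, hf, hd, hh, hg, hii] at hdet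
  have he : N 1 1 = 1 := by linear_combination hdet
  have hd1 : N 1 0 = N 0 1 := by rw [hd, he]; ring
  have hf1 : N 1 2 = N 0 1 := by rw [hf, hd1]
  ext i j
  fin_cases i <;> fin_cases j <;>
    simp [Dm, Matrix.vecHead, Matrix.vecTail] <;> linarith

/-- `D(q)` fixes the null vector `(1,0,−1)`. -/
lemma Dm_fix (q : ℝ) : (Dm q).mulVec ![1,0,-1] = ![1,0,-1] := by
  funext i
  fin_cases i <;>
    simp [Dm, Matrix.mulVec, dotProduct, Fin.sum_univ_three,
      Matrix.vecHead, Matrix.vecTail] <;> ring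

lemma B1_img (t : ℝ) :
    (B1 t).mulVec ![1,0,-1] = ![Real.exp (-t), 0, -Real.exp (-t)] := by
  have h := Real.cosh_sub_sinh t
  funext i
  fin_cases i <;>
    simp [B1, Matrix.mulVec, dotProduct, Fin.sum_univ_three,
      Matrix.vecHead, Matrix.vecTail] <;> linarith

lemma Pmk_img (k : Fin 2) (x z : ℝ) :
    (Pm ^ (k : ℕ)).mulVec ![x, 0, z] = ![x, 0, (-1 : ℝ) ^ (k : ℕ) * z] := by
  fin_cases k <;> funext i <;> fin_cases i <;>
    simp [Pm, Matrix.mulVec, dotProduct, Fin.sum_univ_three,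
      Matrix.vecHead, Matrix.vecTail]

lemma B2_img (s x z : ℝ) :
    (B2 s).mulVec ![x, 0, z] = ![Real.cosh s * x, Real.sinh s * x, z] := by
  funext i
  fin_cases i <;>
    simp [B2, Matrix.mulVec, dotProduct, Fin.sum_univ_three,
      Matrix.vecHead, Matrix.vecTail]

/-- The image of the null vector `(1,0,−1)` under `Λ₂(s) Pᵏ Λ₁(t) D(q)`. -/
lemma img (s t q : ℝ) (k : Fin 2) :
    (B2 s * Pm ^ (k : ℕ) * B1 t * Dm q).mulVec ![1,0,-1] =
      ![Real.exp (-t) * Real.cosh s, Real.exp (-t) * Real.sinh s,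
        -((-1 : ℝ) ^ (k : ℕ) * Real.exp (-t))] := by
  rw [← Matrix.mulVec_mulVec, ← Matrix.mulVec_mulVec, ← Matrix.mulVec_mulVec,
    Dm_fix, B1_img]
  have h1 : (![Real.exp (-t), 0, -Real.exp (-t)] : Fin 3 → ℝ) =
      ![Real.exp (-t), 0, (-(Real.exp (-t)))] := by norm_num
  rw [h1, Pmk_img, B2_img]
  funext i
  fin_cases i <;> simp [mul_comm] <;> ring

lemma AinvA (s t : ℝ) (k : Fin 2) :
    (B1 (-t) * Pm ^ (k : ℕ) * B2 (-s)) * (B2 s * Pm ^ (k : ℕ) * B1 t) = 1 := by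
  have hB2 : B2 (-s) * B2 s = 1 := by rw [B2_mul, neg_add_cancel, B2_zero]
  have hB1 : B1 (-t) * B1 t = 1 := by rw [B1_mul, neg_add_cancel, B1_zero]
  calc (B1 (-t) * Pm ^ (k : ℕ) * B2 (-s)) * (B2 s * Pm ^ (k : ℕ) * B1 t)
      = B1 (-t) * (Pm ^ (k : ℕ) * ((B2 (-s) * B2 s) * (Pm ^ (k : ℕ) * B1 t))) := by
        simp only [Matrix.mul_assoc]
    _ = B1 (-t) * ((Pm ^ (k : ℕ) * Pm ^ (k : ℕ)) * B1 t) := by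
        rw [hB2, one_mul, Matrix.mul_assoc]
    _ = 1 := by rw [Pmk_sq, one_mul, hB1]

lemma AAinv (s t : ℝ) (k : Fin 2) :
    (B2 s * Pm ^ (k : ℕ) * B1 t) * (B1 (-t) * Pm ^ (k : ℕ) * B2 (-s)) = 1 :=
  mul_eq_one_comm.mp (AinvA s t k)

/-- Existence, given the data of the sign case. -/
lemma exists_one (L : Matrix (Fin 3) (Fin 3) ℝ) (hη : L * etaM * Lᵀ = etaM)
    (hdet : L.det = 1) (k : Fin 2) (r v0 v1 v2 : ℝ) (hr : 0 < r)
    (himg : L.mulVec ![1,0,-1] = ![v0, v1, v2])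
    (hv0 : 0 < v0)
    (hQ : v0 ^ 2 = v1 ^ 2 + r ^ 2)
    (hP : (Pm ^ (k : ℕ)).mulVec ![r, 0, v2] = ![r, 0, -r]) :
    ∃ s t q : ℝ, L = B2 s * Pm ^ (k : ℕ) * B1 t * Dm q := by
  obtain ⟨s, hs⟩ : ∃ s, s = Real.arsinh (v1 / r) := ⟨_, rfl⟩
  obtain ⟨t, ht⟩ : ∃ t, t = -Real.log r := ⟨_, rfl⟩
  have hrne : r ≠ 0 := ne_of_gt hr
  have hsinh : Real.sinh s = v1 / r := by rw [hs]; exact Real.sinh_arsinh _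
  have hcosh : Real.cosh s = v0 / r := by
    rw [hs, Real.cosh_arsinh]
    have harg : 1 + (v1 / r) ^ 2 = (v0 / r) ^ 2 := by
      field_simp
      linarith
    rw [harg, Real.sqrt_sq (by positivity)]
  have hexp : Real.exp t = r⁻¹ := by
    rw [ht, Real.exp_neg, Real.exp_log hr]
  have hstep1 : (B2 (-s)).mulVec ![v0, v1, v2] = ![r, 0, v2] := by
    funext i
    fin_cases i <;>
      simp [B2, Matrix.mulVec, dotProduct, Fin.sum_univ_three,
        Matrix.vecHead, Matrix.vecTail, Real.cosh_neg, Real.sinh_neg,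
        hcosh, hsinh] <;> field_simp <;> nlinarith [hQ]
  have hstep3 : (B1 (-t)).mulVec ![r, 0, -r] = ![1, 0, -1] := by
    have hrr : r * r⁻¹ = 1 := mul_inv_cancel₀ hrne
    have hcs2 := Real.cosh_add_sinh t
    rw [hexp] at hcs2
    funext i
    fin_cases i <;>
      simp [B1, Matrix.mulVec, dotProduct, Fin.sum_univ_three,
        Matrix.vecHead, Matrix.vecTail, Real.cosh_neg, Real.sinh_neg] <;>
      nlinarith [hrr, hcs2]
  obtain ⟨N, hN⟩ : ∃ N, N = (B1 (-t) * Pm ^ (k : ℕ) * B2 (-s)) * L := ⟨_, rfl⟩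
  have hNfix : N.mulVec ![1,0,-1] = ![1,0,-1] := by
    rw [hN, ← Matrix.mulVec_mulVec, himg, ← Matrix.mulVec_mulVec,
      ← Matrix.mulVec_mulVec, hstep1, hP, hstep3]
  have hNlor : N * etaM * Nᵀ = etaM := by
    rw [hN]
    exact lor_mul (lor_mul (lor_mul (B1_lor (-t)) (Pmk_lor k)) (B2_lor (-s))) hη
  have hNdet : N.det = 1 := by
    rw [hN]
    simp [Matrix.det_mul, B1_det, B2_det, Matrix.det_pow, Pm_det, hdet]
  have hNeq : N = Dm (N 0 1) := stab N hNlor hNdet hNfix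
  refine ⟨s, t, N 0 1, ?_⟩
  rw [← hNeq]
  calc L = ((B2 s * Pm ^ (k : ℕ) * B1 t) * (B1 (-t) * Pm ^ (k : ℕ) * B2 (-s))) * L := by
        rw [AAinv, one_mul]
    _ = B2 s * Pm ^ (k : ℕ) * B1 t * N := by rw [hN, Matrix.mul_assoc]

/-- Injectivity of the parametrization. -/
lemma inj (s t q : ℝ) (k : Fin 2) (s' t' q' : ℝ) (k' : Fin 2)
    (h : B2 s * Pm ^ (k : ℕ) * B1 t * Dm q = B2 s' * Pm ^ (k' : ℕ) * B1 t' * Dm q') :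
    s = s' ∧ t = t' ∧ q = q' ∧ k = k' := by
  have himg := congrArg (fun M => Matrix.mulVec M ![1,0,-1]) h
  simp only [img] at himg
  -- extract k = k' and t = t'
  have hkt : k = k' ∧ t = t' := by
    have e2 : -((-1 : ℝ) ^ (k : ℕ) * Real.exp (-t)) =
        -((-1 : ℝ) ^ (k' : ℕ) * Real.exp (-t')) := by
      simpa using congrFun himg 2
    have hp := Real.exp_pos (-t)
    have hp' := Real.exp_pos (-t')
    fin_cases k <;> fin_cases k' <;> simp at e2 <;>
      first
        | (exact ⟨rfl, by linarith⟩)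
        | (exact ⟨rfl, by have := Real.exp_injective e2; linarith⟩)
        | (exfalso; nlinarith)
  obtain ⟨hk, htt⟩ := hkt
  have e1 : Real.exp (-t) * Real.sinh s = Real.exp (-t') * Real.sinh s' := by
    simpa using congrFun himg 1
  rw [← htt] at e1
  have hss : s = s' := by
    apply Real.sinh_injective
    exact mul_left_cancel₀ (ne_of_gt (Real.exp_pos (-t))) e1
  subst hss; subst htt; subst hk
  have hq : Dm q = Dm q' := by
    calc Dm q = ((B1 (-t) * Pm ^ (k : ℕ) * B2 (-s)) * (B2 s * Pm ^ (k : ℕ) * B1 t)) * Dm q := by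
          rw [AinvA, one_mul]
      _ = ((B1 (-t) * Pm ^ (k : ℕ) * B2 (-s)) * (B2 s * Pm ^ (k : ℕ) * B1 t)) * Dm q' := by
          simp only [Matrix.mul_assoc] at h ⊢
          rw [h]
      _ = Dm q' := by rw [AinvA, one_mul]
  have : q = q' := by
    have := congrFun (congrFun hq 0) 1
    simpa [Dm] using this
  exact ⟨rfl, rfl, this, rfl⟩

/-- Hannabuss–Takahashi decomposition: if `Λ ∈ SO₀(1,2)` and the
`x₂`-component of `Λ(1,0,−1)` is nonzero, then there are unique `s, t, q ∈ ℝ` and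
`k ∈ {0,1}` with `Λ = Λ₂(s) Pᵏ Λ₁(t) D(q)`. -/
theorem hannabuss_decomposition (L : Matrix (Fin 3) (Fin 3) ℝ) (hL : L ∈ SO012)
    (h2 : (L.mulVec ![1, 0, -1]) 2 ≠ 0) :
    ∃! p : ℝ × ℝ × ℝ × Fin 2,
      L = B2 p.1 * Pm ^ (p.2.2.2 : ℕ) * B1 p.2.1 * Dm p.2.2.1 := by
  obtain ⟨hη, hdet, h00⟩ := hL
  have hv2 : L 2 0 - L 2 2 ≠ 0 := by
    intro hc
    apply h2
    simp [Matrix.mulVec, dotProduct, Fin.sum_univ_three]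
    linarith
  -- row 0 orthonormality
  have R00 : L 0 0 * L 0 0 - L 0 1 * L 0 1 - L 0 2 * L 0 2 = 1 := by
    have := congrFun (congrFun hη 0) 0
    simp [Matrix.mul_apply, Fin.sum_univ_three, etaM, Matrix.transpose_apply,
      Matrix.vecHead, Matrix.vecTail] at this
    linarith
  -- column orthonormality
  have hT := lor_transpose hη
  have C : ∀ i j, L 0 i * L 0 j - L 1 i * L 1 j - L 2 i * L 2 j = etaM i j := by
    intro i j
    have := congrFun (congrFun hT i) j
    simp [Matrix.mul_apply, Fin.sum_univ_three, etaM, Matrix.transpose_apply] at this ⊢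
    fin_cases i <;> fin_cases j <;>
      simp_all [etaM, Matrix.vecHead, Matrix.vecTail] <;> linarith
  have C00 := C 0 0; have C22 := C 2 2; have C02 := C 0 2
  norm_num [etaM, Matrix.cons_val', Matrix.cons_val_two, Matrix.head_cons, Matrix.tail_cons] at C00 C22 C02
  have hv0 : 0 < L 0 0 - L 0 2 := by nlinarith
  have hQnull : (L 0 0 - L 0 2) ^ 2 = (L 1 0 - L 1 2) ^ 2 + (L 2 0 - L 2 2) ^ 2 := by
    linear_combination C00 - 2 * C02 + C22
  have himgL : L.mulVec ![1,0,-1] = ![L 0 0 - L 0 2, L 1 0 - L 1 2, L 2 0 - L 2 2] := by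
    funext i
    fin_cases i <;>
      simp [Matrix.mulVec, dotProduct, Fin.sum_univ_three] <;> ring
  rcases lt_or_gt_of_ne hv2 with hneg | hpos
  · -- v2 < 0 : k = 0, r = -v2
    obtain ⟨s, t, q, hstq⟩ := exists_one L hη hdet 0 (-(L 2 0 - L 2 2))
      (L 0 0 - L 0 2) (L 1 0 - L 1 2) (L 2 0 - L 2 2) (by linarith) himgL
      hv0 (by nlinarith)
      (by
        funext i
        fin_cases i <;>
          simp [Matrix.mulVec, dotProduct, Fin.sum_univ_three,
            Matrix.vecHead, Matrix.vecTail])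
    refine ⟨(s, t, q, 0), by simpa using hstq, ?_⟩
    rintro ⟨s', t', q', k'⟩ hp
    have h' : B2 s' * Pm ^ (k' : ℕ) * B1 t' * Dm q' = B2 s * Pm ^ ((0 : Fin 2) : ℕ) * B1 t * Dm q := by
      rw [← hp]
      simpa using hstq
    obtain ⟨e1, e2, e3, e4⟩ := inj s' t' q' k' s t q 0 h'
    simp [e1, e2, e3, e4]
  · -- v2 > 0 : k = 1, r = v2
    obtain ⟨s, t, q, hstq⟩ := exists_one L hη hdet 1 (L 2 0 - L 2 2)
      (L 0 0 - L 0 2) (L 1 0 - L 1 2) (L 2 0 - L 2 2) hpos himgL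
      hv0 (by nlinarith)
      (by
        funext i
        fin_cases i <;>
          simp [Pm, Matrix.mulVec, dotProduct, Fin.sum_univ_three,
            Matrix.vecHead, Matrix.vecTail])
    refine ⟨(s, t, q, 1), by simpa using hstq, ?_⟩
    rintro ⟨s', t', q', k'⟩ hp
    have h' : B2 s' * Pm ^ (k' : ℕ) * B1 t' * Dm q' = B2 s * Pm ^ ((1 : Fin 2) : ℕ) * B1 t * Dm q := by
      rw [← hp]
      simpa using hstq
    obtain ⟨e1, e2, e3, e4⟩ := inj s' t' q' k' s t q 1 h'
    simp [e1, e2, e3, e4]
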